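/- The Newton polytope of every inflated symmetric Grothendieck polynomial G_{h,λ}(x_1,...,x_m) has the integer decomposition property. -/

import Mathlib

open scoped Pointwise

/-- `mu` is a partition with at most `m` parts (weakly decreasing entries). -/
def IsPartition (m : ℕ) (mu : Fin m → ℕ) : Prop := ∀ i j : Fin m, i ≤ j → mu j ≤ mu i

/-- A filling of the skew shape `μ/λ` that increases strictly along each row and each
column, with entries in row `r` (0-indexed) taken from `{1, ..., h·r}` (i.e. row `r+1`
in 1-indexed terms gets entries from `{1, ..., h(r+1-1)}`). These are the fillings
counted by `b_{h,λμ}`. -/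
structure SkewFilling (m h : ℕ) (lam mu : Fin m → ℕ) where
  entry : Fin m → ℕ → ℕ
  one_le : ∀ i j, lam i ≤ j → j < mu i → 1 ≤ entry i j
  upper : ∀ i j, lam i ≤ j → j < mu i → entry i j ≤ h * i.1
  row_strict : ∀ i j k, lam i ≤ j → j < k → k < mu i → entry i j < entry i k
  col_strict : ∀ i k : Fin m, ∀ j, i < k → lam i ≤ j → j < mu i → lam k ≤ j → j < mu k →
    entry i j < entry k j

/-- `μ ∈ A(h,λ)`: `μ` is a partition containing `λ` with `b_{h,λμ} ≠ 0`,
i.e. admitting at least one valid skew filling of `μ/λ`. -/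
def AMem (m h : ℕ) (lam mu : Fin m → ℕ) : Prop :=
  IsPartition m mu ∧ (∀ i, lam i ≤ mu i) ∧ Nonempty (SkewFilling m h lam mu)

/-- A box may be added to row `r` of `nu` (relative to base partition `lam`):
fewer than `h·r` boxes have been added to row `r` so far, and the result is
still a partition. -/
def Addable (m h : ℕ) (lam nu : Fin m → ℕ) (r : Fin m) : Prop :=
  nu r - lam r < h * r.1 ∧ ∀ q : Fin m, q.1 + 1 = r.1 → nu r < nu q

open scoped Classical in
/-- One step in the construction of the sequence of dominating partitions:
add a box in the smallest addable row (if any). -/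
noncomputable def domStep (m h : ℕ) (lam nu : Fin m → ℕ) : Fin m → ℕ :=
  if hne : (Finset.univ.filter (Addable m h lam nu)).Nonempty then
    Function.update nu ((Finset.univ.filter (Addable m h lam nu)).min' hne)
      (nu ((Finset.univ.filter (Addable m h lam nu)).min' hne) + 1)
  else nu

/-- The sequence of dominating partitions `λ^{(0)} = λ, λ^{(1)}, λ^{(2)}, ...`
for the inflated symmetric Grothendieck polynomial `G_{h,λ}`. -/
noncomputable def domSeq (m h : ℕ) (lam : Fin m → ℕ) : ℕ → Fin m → ℕ
  | 0 => lam
  | k + 1 => domStep m h lam (domSeq m h lam k)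

/-- Dominance order: `a` dominates `b` if all partial sums of `a` are at least
those of `b`. -/
def Dominates (m : ℕ) (a b : Fin m → ℕ) : Prop :=
  ∀ r : Fin m, ∑ i ∈ Finset.univ.filter (fun i => i ≤ r), b i ≤
    ∑ i ∈ Finset.univ.filter (fun i => i ≤ r), a i

/-- The `ν`-permutohedron: the convex hull of all coordinate permutations of
`(ν_1, ..., ν_m)` in `ℝ^m`; this is the Newton polytope of the Schur polynomial `s_ν`. -/
def permPoly (m : ℕ) (nu : Fin m → ℕ) : Set (Fin m → ℝ) :=
  convexHull ℝ {x : Fin m → ℝ | ∃ σ : Equiv.Perm (Fin m), x = fun i => (nu (σ i) : ℝ)}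

/-- The Newton polytope of the inflated symmetric Grothendieck polynomial
`G_{h,λ}(x) = Σ_{μ ∈ A(h,λ)} (−1)^{|μ/λ|} b_{h,λμ} s_μ(x)`: since within each
homogeneous degree all coefficients have the same sign (no cancellation), it is the
convex hull of the exponent vectors of the `s_μ`, `μ ∈ A(h,λ)`, i.e. the convex hull
of the `S_m`-orbits of the partitions in `A(h,λ)`. -/
def NewtG (m h : ℕ) (lam : Fin m → ℕ) : Set (Fin m → ℝ) :=
  convexHull ℝ {x : Fin m → ℝ | ∃ mu : Fin m → ℕ, AMem m h lam mu ∧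
    ∃ σ : Equiv.Perm (Fin m), x = fun i => (mu (σ i) : ℝ)}

open Finset

/-- A strictly monotone map of `Fin`s grows at least as fast as the identity. -/
lemma finStrictMono_le {a b : ℕ} {f : Fin a → Fin b} (hf : StrictMono f) :
    ∀ j (hj : j < a), j ≤ (f ⟨j, hj⟩ : Fin b).1 := by
  intro j
  induction j with
  | zero => intro hj; exact Nat.zero_le _
  | succ j ih =>
    intro hj
    have h1 : j < a := Nat.lt_of_succ_lt hj
    have h2 : f ⟨j, h1⟩ < f ⟨j + 1, hj⟩ := hf (by simp [Fin.mk_lt_mk])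
    have h3 := ih h1
    have h4 : (f ⟨j, h1⟩ : Fin b).1 < (f ⟨j+1, hj⟩ : Fin b).1 := h2
    omega

/-- Reversed version: a strictly monotone map of `Fin`s is bounded above coordinatewise. -/
lemma finStrictMono_ge {a b : ℕ} {f : Fin a → Fin b} (hf : StrictMono f) :
    ∀ j (hj : j < a), (f ⟨j, hj⟩ : Fin b).1 ≤ b - a + j := by
  intro j hj
  have hb : 0 < b := (f ⟨j, hj⟩).pos
  have key : ∀ i (hi : i < a), b - 1 - (f ⟨a - 1 - i, by omega⟩ : Fin b).1 ≥ i := by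
    intro i
    induction i with
    | zero => intro hi; omega
    | succ i ih =>
      intro hi
      have h1 : i < a := Nat.lt_of_succ_lt hi
      have h2 : f ⟨a - 1 - (i+1), by omega⟩ < f ⟨a - 1 - i, by omega⟩ :=
        hf (by simp [Fin.mk_lt_mk]; omega)
      have h3 := ih h1
      have h4 : (f ⟨a - 1 - (i+1), by omega⟩ : Fin b).1 < (f ⟨a - 1 - i, by omega⟩ : Fin b).1 := h2
      have h5 : (f ⟨a - 1 - i, by omega⟩ : Fin b).1 < b := (f _).2
      omega
  have h6 := key (a - 1 - j) (by omega)
  have h8 : f ⟨a - 1 - (a - 1 - j), by omega⟩ = f ⟨j, hj⟩ := by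
    congr 1
    apply Fin.ext
    show a - 1 - (a - 1 - j) = j
    omega
  rw [h8] at h6
  have h9 : (f ⟨j, hj⟩ : Fin b).1 < b := (f _).2
  omega

/-- Sum over a subset is at most the sum of the largest `T.card` values of an antitone function. -/
lemma subset_sum_le_prefix {m : ℕ} {w : Fin m → ℕ}
    (hw : ∀ i j : Fin m, i ≤ j → w j ≤ w i) (T : Finset (Fin m)) (wN : ℕ → ℕ)
    (hwN : ∀ i : Fin m, wN i.1 = w i) :
    ∑ i ∈ T, w i ≤ ∑ j ∈ range T.card, wN j := by
  classical
  set s := T.card with hs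
  have hsm : s ≤ m := by simpa using T.card_le_card (subset_univ T)
  have e := T.orderIsoOfFin (k := s) rfl
  have hmono : StrictMono (fun k : Fin s => ((e k : Fin m))) := fun x y hxy => e.strictMono hxy
  have hTsum : ∑ i ∈ T, w i = ∑ k : Fin s, w (e k) := by
    rw [← Finset.sum_attach T w]
    exact (Equiv.sum_comp e.toEquiv (fun x => w x.1)).symm
  rw [hTsum, ← Fin.sum_univ_eq_sum_range]
  apply Finset.sum_le_sum
  intro k _
  have hkm : (k : ℕ) < m := lt_of_lt_of_le k.2 hsm
  have hk : (k : ℕ) ≤ ((e k : Fin m) : ℕ) := by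
    have := finStrictMono_le hmono k.1 k.2
    simpa using this
  have h1 : w (e k) ≤ w ⟨k, hkm⟩ := hw _ _ hk
  have h2 : wN (k : ℕ) = w ⟨k, hkm⟩ := hwN ⟨k, hkm⟩
  rw [h2]
  exact h1

/-- Sum over a subset is at least the sum of the smallest `T.card` values of an antitone function. -/
lemma subset_sum_ge_suffix {m : ℕ} {w : Fin m → ℕ}
    (hw : ∀ i j : Fin m, i ≤ j → w j ≤ w i) (T : Finset (Fin m)) (wN : ℕ → ℕ)
    (hwN : ∀ i : Fin m, wN i.1 = w i) :
    ∑ j ∈ range T.card, wN (m - T.card + j) ≤ ∑ i ∈ T, w i := by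
  classical
  set s := T.card with hs
  have hsm : s ≤ m := by simpa using T.card_le_card (subset_univ T)
  have e := T.orderIsoOfFin (k := s) rfl
  have hmono : StrictMono (fun k : Fin s => ((e k : Fin m))) := fun x y hxy => e.strictMono hxy
  have hTsum : ∑ i ∈ T, w i = ∑ k : Fin s, w (e k) := by
    rw [← Finset.sum_attach T w]
    exact (Equiv.sum_comp e.toEquiv (fun x => w x.1)).symm
  rw [hTsum, ← Fin.sum_univ_eq_sum_range]
  apply Finset.sum_le_sum
  intro k _
  have hk : ((e k : Fin m) : ℕ) ≤ m - s + k := by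
    have := finStrictMono_ge hmono k.1 k.2
    simpa using this
  have hkm : m - s + (k : ℕ) < m := by omega
  have h1 : w ⟨m - s + k, hkm⟩ ≤ w (e k) := hw _ _ hk
  have h2 : wN (m - s + (k : ℕ)) = w ⟨m - s + k, hkm⟩ := hwN ⟨m - s + k, hkm⟩
  rw [h2]
  exact h1



/-- Selection of a "top-k" subset of capacities. -/
lemma exists_top_subset {ι : Type*} [Fintype ι] [DecidableEq ι] (c : ι → ℕ) :
    ∀ k, k ≤ Fintype.card ι →
      ∃ J : Finset ι, J.card = k ∧ ∀ j ∈ J, ∀ j' ∉ J, c j' ≤ c j := by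
  intro k
  induction k with
  | zero => intro _; exact ⟨∅, rfl, by simp⟩
  | succ k ih =>
    intro hk
    obtain ⟨J, hJcard, hJtop⟩ := ih (Nat.le_of_succ_le hk)
    have hne : (Finset.univ \ J).Nonempty := by
      rw [sdiff_nonempty]
      intro hsub
      have := Finset.card_le_card hsub
      simp only [card_univ] at this
      omega
    obtain ⟨j₀, hj₀mem, hj₀max⟩ := Finset.exists_max_image (Finset.univ \ J) c hne
    have hj₀notJ : j₀ ∉ J := (Finset.mem_sdiff.mp hj₀mem).2
    refine ⟨insert j₀ J, ?_, ?_⟩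
    · rw [Finset.card_insert_of_notMem hj₀notJ, hJcard]
    · intro j hj j' hj'
      have hj'J : j' ∉ J := fun h => hj' (Finset.mem_insert_of_mem h)
      have hj'ne : j' ≠ j₀ := fun h => hj' (h ▸ Finset.mem_insert_self _ _)
      rcases Finset.mem_insert.mp hj with h | h
      · subst h
        exact hj₀max j' (Finset.mem_sdiff.mpr ⟨Finset.mem_univ _, hj'J⟩)
      · exact hJtop j h j' hj'J

/-- Weak Gale–Ryser: a vector dominated by a sum of capacity-truncation functions can be
written as a sum of indicator vectors of sets respecting the capacities. -/
lemma gale_ryser_weak {κ : Type*} [Fintype κ] [DecidableEq κ]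
    {ι : Type*} [Fintype ι] [DecidableEq ι] :
    ∀ (n : ℕ) (s : Finset κ) (_ : s.card ≤ n) (c : ι → ℕ) (p : κ → ℕ),
    (∀ T ⊆ s, ∑ i ∈ T, p i ≤ ∑ j, min T.card (c j)) →
    ∃ S : ι → Finset κ, (∀ j, S j ⊆ s) ∧ (∀ j, (S j).card ≤ c j) ∧
      (∀ i ∈ s, p i = ∑ j, (if i ∈ S j then 1 else 0)) := by
  intro n
  induction n with
  | zero =>
    intro s hs c p _
    have : s = ∅ := Finset.card_eq_zero.mp (Nat.le_zero.mp hs)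
    subst this
    exact ⟨fun _ => ∅, fun _ => by simp, fun _ => by simp, fun i hi => absurd hi (by simp)⟩
  | succ n ih =>
    intro s hs c p hyp
    rcases Finset.eq_empty_or_nonempty s with rfl | hne
    · exact ⟨fun _ => ∅, fun _ => by simp, fun _ => by simp, fun i hi => absurd hi (by simp)⟩
    obtain ⟨i₀, hi₀mem, hi₀max⟩ := Finset.exists_max_image s p hne
    set p₀ := p i₀ with hp₀
    -- p₀ is at most the number of positive capacities
    have hp₀le : p₀ ≤ (Finset.univ.filter (fun j => 1 ≤ c j)).card := by
      have h1 := hyp {i₀} (by simpa using hi₀mem)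
      simp only [Finset.sum_singleton, Finset.card_singleton] at h1
      calc p₀ ≤ ∑ j, min 1 (c j) := h1
        _ = ∑ j, (if 1 ≤ c j then 1 else 0) := by
            apply Finset.sum_congr rfl; intro j _
            by_cases h : 1 ≤ c j
            · simp only [h, if_true]; omega
            · simp only [h, if_false]; omega
        _ = (Finset.univ.filter (fun j => 1 ≤ c j)).card := by
            rw [Finset.card_filter]
    have hp₀card : p₀ ≤ Fintype.card ι :=
      le_trans hp₀le (Finset.card_le_univ _)
    obtain ⟨J, hJcard, hJtop⟩ := exists_top_subset c p₀ hp₀card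
    -- capacities in J are positive
    have hJpos : ∀ j ∈ J, 1 ≤ c j := by
      intro j hj
      by_contra hc
      push_neg at hc
      have hc0 : c j = 0 := by omega
      have hsub : (Finset.univ.filter (fun j' => 1 ≤ c j')) ⊆ J.erase j := by
        intro j' hj'
        simp only [Finset.mem_filter] at hj'
        rcases Finset.decidableMem j' J with h | h
        · -- j' ∉ J
          exfalso
          have := hJtop j hj j' h
          omega
        · exact Finset.mem_erase.mpr ⟨fun heq => by subst heq; omega, h⟩
      have h5 := Finset.card_le_card hsub
      rw [Finset.card_erase_of_mem hj, hJcard] at h5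
      have h6 : 0 < J.card := Finset.card_pos.mpr ⟨j, hj⟩
      rw [hJcard] at h6
      omega
    set c' : ι → ℕ := fun j => if j ∈ J then c j - 1 else c j with hc'
    set s' := s.erase i₀ with hs'
    have hs'card : s'.card ≤ n := by
      rw [hs', Finset.card_erase_of_mem hi₀mem]
      have := Finset.card_pos.mpr hne
      omega
    have hyp' : ∀ T ⊆ s', ∑ i ∈ T, p i ≤ ∑ j, min T.card (c' j) := by
      intro T hTs'
      by_cases hcase : ∃ j' ∉ J, T.card + 1 ≤ c j'
      · obtain ⟨j', hj'J, hj'c⟩ := hcase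
        have hTb : ∑ i ∈ T, p i ≤ T.card * p₀ := by
          calc ∑ i ∈ T, p i ≤ ∑ _i ∈ T, p₀ := by
                apply Finset.sum_le_sum
                intro i hi
                exact hi₀max i (Finset.mem_of_mem_erase (hTs' hi))
            _ = T.card * p₀ := by rw [Finset.sum_const, smul_eq_mul]
        have hlow : (insert j' J).card * T.card ≤ ∑ j, min T.card (c' j) := by
          have hsub : insert j' J ⊆ Finset.univ := Finset.subset_univ _
          calc (insert j' J).card * T.card = ∑ j ∈ insert j' J, T.card := by
                rw [Finset.sum_const, smul_eq_mul]
            _ = ∑ j ∈ insert j' J, min T.card (c' j) := by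
                apply Finset.sum_congr rfl
                intro j hj
                rcases Finset.mem_insert.mp hj with h | h
                · subst h
                  have : c' j = c j := by simp [hc', hj'J]
                  rw [this, Nat.min_eq_left (by omega)]
                · have hcj : c j ≥ c j' := hJtop j h j' hj'J
                  have : c' j = c j - 1 := by simp [hc', h]
                  rw [this, Nat.min_eq_left (by omega)]
            _ ≤ ∑ j, min T.card (c' j) := Finset.sum_le_sum_of_subset hsub
        have hins : (insert j' J).card = p₀ + 1 := by
          rw [Finset.card_insert_of_notMem hj'J, hJcard]
        calc ∑ i ∈ T, p i ≤ T.card * p₀ := hTb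
          _ ≤ (p₀ + 1) * T.card := by nlinarith
          _ = (insert j' J).card * T.card := by rw [hins]
          _ ≤ _ := hlow
      · push_neg at hcase
        have key : ∀ j, min (T.card + 1) (c j) = min T.card (c' j) + (if j ∈ J then 1 else 0) := by
          intro j
          by_cases hj : j ∈ J
          · have h1 : 1 ≤ c j := hJpos j hj
            have h2 : c' j = c j - 1 := by simp [hc', hj]
            simp only [h2, hj, if_true]
            omega
          · have h1 : c j < T.card + 1 := hcase j hj
            have h2 : c' j = c j := by simp [hc', hj]
            simp only [h2, hj, if_false]
            omega
        have hsum : ∑ j, min (T.card + 1) (c j) = (∑ j, min T.card (c' j)) + p₀ := by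
          calc ∑ j, min (T.card + 1) (c j)
              = ∑ j, (min T.card (c' j) + (if j ∈ J then 1 else 0)) :=
                Finset.sum_congr rfl (fun j _ => key j)
            _ = (∑ j, min T.card (c' j)) + ∑ j, (if j ∈ J then 1 else 0) :=
                Finset.sum_add_distrib
            _ = (∑ j, min T.card (c' j)) + p₀ := by
                rw [Finset.sum_ite_mem, Finset.univ_inter, Finset.sum_const, smul_eq_mul,
                  mul_one, hJcard]
        have hTi₀ : i₀ ∉ T := fun h => (Finset.mem_erase.mp (hTs' h)).1 rfl
        have hcard : (insert i₀ T).card = T.card + 1 := Finset.card_insert_of_notMem hTi₀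
        have hsub : insert i₀ T ⊆ s := by
          intro x hx
          rcases Finset.mem_insert.mp hx with h | h
          · exact h ▸ hi₀mem
          · exact Finset.mem_of_mem_erase (hTs' h)
        have h2 := hyp (insert i₀ T) hsub
        rw [hcard, Finset.sum_insert hTi₀, hsum] at h2
        omega
    obtain ⟨S', hS'sub, hS'card, hS'count⟩ := ih s' hs'card c' p
      (by intro T hT; exact hyp' T hT)
    refine ⟨fun j => if j ∈ J then insert i₀ (S' j) else S' j, ?_, ?_, ?_⟩
    · intro j
      by_cases hj : j ∈ J <;> simp only [hj, if_true, if_false]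
      · intro x hx
        rcases Finset.mem_insert.mp hx with h | h
        · exact h ▸ hi₀mem
        · exact Finset.mem_of_mem_erase (hS'sub j h)
      · exact fun x hx => Finset.mem_of_mem_erase (hS'sub j hx)
    · intro j
      by_cases hj : j ∈ J <;> simp only [hj, if_true, if_false]
      · have hi₀S' : i₀ ∉ S' j := fun h => (Finset.mem_erase.mp (hS'sub j h)).1 rfl
        rw [Finset.card_insert_of_notMem hi₀S']
        have h1 := hS'card j
        have h2 : c' j = c j - 1 := by simp [hc', hj]
        have h3 := hJpos j hj
        omega
      · have h1 := hS'card j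
        have h2 : c' j = c j := by simp [hc', hj]
        omega
    · intro i hi
      by_cases hii₀ : i = i₀
      · subst hii₀
        have : ∀ j, (if i ∈ (if j ∈ J then insert i (S' j) else S' j) then 1 else 0)
            = (if j ∈ J then 1 else 0) := by
          intro j
          by_cases hj : j ∈ J <;> simp only [hj, if_true, if_false]
          · simp
          · have : i ∉ S' j := fun h => (Finset.mem_erase.mp (hS'sub j h)).1 rfl
            simp [this]
        rw [Finset.sum_congr rfl (fun j _ => this j)]
        rw [Finset.sum_ite_mem, Finset.univ_inter, Finset.sum_const, smul_eq_mul, mul_one, hJcard]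
      · have hi' : i ∈ s' := Finset.mem_erase.mpr ⟨hii₀, hi⟩
        have h1 := hS'count i hi'
        rw [h1]
        apply Finset.sum_congr rfl
        intro j _
        by_cases hj : j ∈ J <;> simp only [hj, if_true, if_false]
        have hiins : (i ∈ insert i₀ (S' j)) ↔ i ∈ S' j := by
          rw [Finset.mem_insert]
          simp [hii₀]
        simp [hiins]



variable {m : ℕ}

/-- The set of the `k` smallest indices of `Fin m`. -/
def pref (m k : ℕ) : Finset (Fin m) := Finset.univ.filter (fun i => (i : ℕ) < k)

lemma mem_pref {k : ℕ} {r : Fin m} : r ∈ pref m k ↔ (r : ℕ) < k := by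
  simp [pref]

lemma pref_univ : pref m m = Finset.univ := by
  ext r; simp [mem_pref, r.2]

lemma pref_succ_eq_insert {k : ℕ} (hk : k < m) :
    pref m (k + 1) = insert (⟨k, hk⟩ : Fin m) (pref m k) := by
  ext r
  simp only [mem_pref, Finset.mem_insert, Fin.ext_iff]
  omega

lemma self_not_mem_pref {k : ℕ} (hk : k < m) : (⟨k, hk⟩ : Fin m) ∉ pref m k := by
  simp [mem_pref]

lemma sum_pref_range {M : Type*} [AddCommMonoid M] (f : Fin m → M) (fN : ℕ → M)
    (h : ∀ i : Fin m, fN i.1 = f i) :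
    ∀ k, k ≤ m → ∑ i ∈ pref m k, f i = ∑ j ∈ range k, fN j := by
  intro k
  induction k with
  | zero => intro _; simp [pref]
  | succ k ih =>
    intro hk
    have hkm : k < m := hk
    rw [pref_succ_eq_insert hkm, Finset.sum_insert (self_not_mem_pref hkm),
      Finset.sum_range_succ, ih (le_of_lt hkm), h ⟨k, hkm⟩]
    rw [add_comm]

lemma pref_card {k : ℕ} (hk : k ≤ m) : (pref m k).card = k := by
  induction k with
  | zero => simp [pref]
  | succ k ih =>
    have hkm : k < m := hk
    rw [pref_succ_eq_insert hkm, Finset.card_insert_of_notMem (self_not_mem_pref hkm),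
      ih (le_of_lt hkm)]

/-- The orbit of a vector under coordinate permutations. -/
def orbSet (w : Fin m → ℝ) : Set (Fin m → ℝ) := {z | ∃ σ : Equiv.Perm (Fin m), z = w ∘ ⇑σ}

lemma orbSet_perm {w z : Fin m → ℝ} (hz : z ∈ orbSet w) (τ : Equiv.Perm (Fin m)) :
    z ∘ ⇑τ ∈ orbSet w := by
  obtain ⟨σ, rfl⟩ := hz
  exact ⟨τ.trans σ, rfl⟩

lemma convexHull_perm {S : Set (Fin m → ℝ)} (hS : ∀ z ∈ S, ∀ τ : Equiv.Perm (Fin m), z ∘ ⇑τ ∈ S)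
    {x : Fin m → ℝ} (hx : x ∈ convexHull ℝ S) (τ : Equiv.Perm (Fin m)) :
    x ∘ ⇑τ ∈ convexHull ℝ S := by
  classical
  let f : (Fin m → ℝ) →ₗ[ℝ] (Fin m → ℝ) := LinearMap.funLeft ℝ ℝ ⇑τ
  have himg : f '' S ⊆ S := by
    rintro - ⟨z, hz, rfl⟩
    exact hS z hz τ
  have h1 : f x ∈ f '' (convexHull ℝ S) := Set.mem_image_of_mem f hx
  rw [f.image_convexHull] at h1
  exact convexHull_mono himg h1

/-- Core Rado-type theorem, sorted version. -/
lemma rado_sorted :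
    ∀ (N : ℕ) (x w : Fin m → ℝ),
    (∀ i j : Fin m, i ≤ j → x j ≤ x i) →
    (∀ i j : Fin m, i ≤ j → w j ≤ w i) →
    (∀ k, k ≤ m → ∑ i ∈ pref m k, x i ≤ ∑ i ∈ pref m k, w i) →
    (∑ i, x i = ∑ i, w i) →
    ((Finset.univ.filter (fun i => x i ≠ w i)).card ≤ N) →
    x ∈ convexHull ℝ (orbSet w) := by
  classical
  intro N
  induction N with
  | zero =>
    intro x w _ _ _ _ hcard
    have hfe : (Finset.univ.filter (fun i => x i ≠ w i)) = ∅ :=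
      Finset.card_eq_zero.mp (Nat.le_zero.mp hcard)
    have : x = w := by
      funext i
      by_contra hne
      have : i ∈ Finset.univ.filter (fun i => x i ≠ w i) := by simp [hne]
      rw [hfe] at this
      exact absurd this (Finset.notMem_empty _)
    subst this
    exact subset_convexHull ℝ _ ⟨Equiv.refl _, by funext r; simp⟩
  | succ N ih =>
    intro x w hx hw hpre hsum hcard
    by_cases hxw : ∀ i, x i = w i
    · have : x = w := funext hxw
      subst this
      exact subset_convexHull ℝ _ ⟨Equiv.refl _, by funext r; simp⟩
    -- there is a coordinate with x > w
    have hFjne : (Finset.univ.filter (fun r => w r < x r)).Nonempty := by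
      by_contra hno
      rw [Finset.not_nonempty_iff_eq_empty] at hno
      have hle : ∀ r : Fin m, x r ≤ w r := by
        intro r
        by_contra hlt
        push_neg at hlt
        have : r ∈ Finset.univ.filter (fun r => w r < x r) := by simp [hlt]
        rw [hno] at this
        exact absurd this (Finset.notMem_empty _)
      have := (Finset.sum_eq_sum_iff_of_le (fun i _ => hle i)).mp hsum
      exact hxw (fun i => this i (Finset.mem_univ i))
    set j := (Finset.univ.filter (fun r => w r < x r)).min' hFjne with hj
    have hjprop : w j < x j := by
      have h0 := Finset.min'_mem (Finset.univ.filter (fun r => w r < x r)) hFjne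
      rw [Finset.mem_filter] at h0
      exact h0.2
    have hjmin : ∀ r, w r < x r → j ≤ r := by
      intro r hr
      exact Finset.min'_le _ _ (by simp [hr])
    -- there is a coordinate below j with x < w
    have hFine : (Finset.univ.filter (fun r => r < j ∧ x r < w r)).Nonempty := by
      have hjm : (j : ℕ) + 1 ≤ m := j.2
      have h1 := hpre ((j : ℕ) + 1) hjm
      have hins : pref m ((j : ℕ) + 1) = insert j (pref m (j : ℕ)) := by
        have := pref_succ_eq_insert (m := m) j.2
        simpa using this
      rw [hins, Finset.sum_insert (by simpa using self_not_mem_pref (m := m) j.2),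
        Finset.sum_insert (by simpa using self_not_mem_pref (m := m) j.2)] at h1
      by_contra hno
      rw [Finset.not_nonempty_iff_eq_empty] at hno
      have hge : ∀ r ∈ pref m (j : ℕ), w r ≤ x r := by
        intro r hr
        by_contra hlt
        push_neg at hlt
        have hrj : r < j := by
          have := mem_pref.mp hr
          exact Fin.lt_def.mpr this
        have : r ∈ Finset.univ.filter (fun r => r < j ∧ x r < w r) := by
          simp [hrj, hlt]
        rw [hno] at this
        exact absurd this (Finset.notMem_empty _)
      have h2 : ∑ i ∈ pref m (j : ℕ), w i ≤ ∑ i ∈ pref m (j : ℕ), x i :=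
        Finset.sum_le_sum hge
      linarith
    set i := (Finset.univ.filter (fun r => r < j ∧ x r < w r)).max' hFine with hi
    have hiprop : i < j ∧ x i < w i := by
      have h0 := Finset.max'_mem (Finset.univ.filter (fun r => r < j ∧ x r < w r)) hFine
      rw [Finset.mem_filter] at h0
      exact h0.2
    have himax : ∀ r, r < j → x r < w r → r ≤ i := by
      intro r h1 h2
      exact Finset.le_max' _ _ (by simp [h1, h2])
    have hbetween : ∀ r, i < r → r < j → x r = w r := by
      intro r h1 h2
      have hle1 : x r ≤ w r := by
        by_contra hlt
        push_neg at hlt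
        have := hjmin r hlt
        exact absurd (lt_of_le_of_lt this h2) (lt_irrefl j)
      rcases eq_or_lt_of_le hle1 with h | h
      · exact h
      · exact absurd (himax r h2 h) (not_le.mpr h1)
    set δ := min (w i - x i) (x j - w j) with hδ
    have hδpos : 0 < δ := lt_min (by linarith [hiprop.2]) (by linarith [hjprop])
    have hδ1 : δ ≤ w i - x i := min_le_left _ _
    have hδ2 : δ ≤ x j - w j := min_le_right _ _
    have hxij : x j ≤ x i := hx i j (le_of_lt hiprop.1)
    have hchain : w j + δ ≤ x j ∧ x i ≤ w i - δ := ⟨by linarith, by linarith⟩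
    have hwij : w j < w i := by linarith
    set c := δ / (w i - w j) with hc
    have hwijpos : 0 < w i - w j := by linarith
    have hc0 : 0 < c := div_pos hδpos hwijpos
    have hc1 : c ≤ 1 := by
      rw [div_le_one hwijpos]
      linarith
    have hij_ne : i ≠ j := ne_of_lt hiprop.1
    set w' : Fin m → ℝ := fun r => if r = i then w i - δ else if r = j then w j + δ else w r
      with hw'
    have hw'i : w' i = w i - δ := by simp [hw']
    have hw'j : w' j = w j + δ := by simp [hw', hij_ne.symm]
    have hw'other : ∀ r, r ≠ i → r ≠ j → w' r = w r := by
      intro r h1 h2; simp [hw', h1, h2]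
    -- w' is antitone
    have hw'anti : ∀ r s : Fin m, r ≤ s → w' s ≤ w' r := by
      intro r s hrs
      rcases eq_or_ne r s with rfl | hrsne
      · exact le_refl _
      have hrslt : r < s := lt_of_le_of_ne hrs hrsne
      by_cases hr_i : r = i
      · rw [hr_i, hw'i]
        rw [hr_i] at hrslt
        by_cases hs_j : s = j
        · rw [hs_j, hw'j]; linarith
        · have hs_i : s ≠ i := (ne_of_gt hrslt)
          rw [hw'other s hs_i hs_j]
          rcases lt_trichotomy s j with h | h | h
          · have hb := hbetween s hrslt h
            have h2 := hx i s (le_of_lt hrslt)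
            linarith
          · exact absurd h hs_j
          · have h1 : w s ≤ w j := hw j s (le_of_lt h)
            linarith
      by_cases hr_j : r = j
      · rw [hr_j, hw'j]
        rw [hr_j] at hrslt
        have hs_j : s ≠ j := (ne_of_gt hrslt)
        have hs_i : s ≠ i := by
          intro h
          rw [h] at hrslt
          exact absurd (lt_trans hiprop.1 hrslt) (lt_irrefl _)
        rw [hw'other s hs_i hs_j]
        have h2 := hw j s (le_of_lt hrslt)
        linarith
      rw [hw'other r hr_i hr_j]
      by_cases hs_i : s = i
      · rw [hs_i, hw'i]
        rw [hs_i] at hrslt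
        have h2 := hw r i (le_of_lt hrslt)
        linarith
      by_cases hs_j : s = j
      · rw [hs_j, hw'j]
        rw [hs_j] at hrslt
        rcases lt_trichotomy r i with h | h | h
        · have h2 := hw r i (le_of_lt h)
          linarith
        · exact absurd h hr_i
        · have hb := hbetween r h hrslt
          have hxr : x j ≤ x r := hx r j (le_of_lt hrslt)
          linarith [hchain.1]
      · rw [hw'other s hs_i hs_j]
        exact hw r s hrs
    -- prefix sums of w'
    have hδsum : ∀ k, k ≤ m → (i : ℕ) < k → k ≤ (j : ℕ) →
        δ ≤ ∑ r ∈ pref m k, (w r - x r) := by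
      intro k hkm hik hkj
      have hsub1 : pref m ((i : ℕ) + 1) ⊆ pref m k := by
        intro r hr
        rw [mem_pref] at hr ⊢
        omega
      have hsplit := Finset.sum_sdiff (f := fun r => w r - x r) hsub1
      have hzero : ∑ r ∈ pref m k \ pref m ((i : ℕ) + 1), (w r - x r) = 0 := by
        apply Finset.sum_eq_zero
        intro r hr
        rw [Finset.mem_sdiff, mem_pref, mem_pref] at hr
        have h1 : i < r := by
          rw [Fin.lt_def]; omega
        have h2 : r < j := by
          rw [Fin.lt_def]; omega
        rw [hbetween r h1 h2]
        ring
      have hins : pref m ((i : ℕ) + 1) = insert i (pref m (i : ℕ)) := by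
        have := pref_succ_eq_insert (m := m) i.2
        simpa using this
      have h3 : ∑ r ∈ pref m ((i : ℕ) + 1), (w r - x r)
          = (w i - x i) + ∑ r ∈ pref m (i : ℕ), (w r - x r) := by
        rw [hins, Finset.sum_insert (by simpa using self_not_mem_pref (m := m) i.2)]
      have h4 : 0 ≤ ∑ r ∈ pref m (i : ℕ), (w r - x r) := by
        have := hpre (i : ℕ) (le_of_lt i.2)
        rw [Finset.sum_sub_distrib]
        linarith
      have h5 : δ ≤ ∑ r ∈ pref m ((i : ℕ) + 1), (w r - x r) := by
        rw [h3]; linarith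
      calc δ ≤ ∑ r ∈ pref m ((i : ℕ) + 1), (w r - x r) := h5
        _ = ∑ r ∈ pref m k, (w r - x r) - ∑ r ∈ pref m k \ pref m ((i : ℕ) + 1), (w r - x r) := by
            rw [← hsplit]; ring
        _ = ∑ r ∈ pref m k, (w r - x r) := by rw [hzero]; ring
    have hpre' : ∀ k, k ≤ m → ∑ r ∈ pref m k, x r ≤ ∑ r ∈ pref m k, w' r := by
      intro k hkm
      have hdiff : ∑ r ∈ pref m k, w' r = ∑ r ∈ pref m k, w r + ∑ r ∈ pref m k, (w' r - w r) := by
        rw [Finset.sum_sub_distrib]; ring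
      rcases le_or_gt k (i : ℕ) with hk1 | hk1
      · -- neither i nor j in pref k
        have hzero : ∑ r ∈ pref m k, (w' r - w r) = 0 := by
          apply Finset.sum_eq_zero
          intro r hr
          rw [mem_pref] at hr
          have h1 : r ≠ i := by
            intro h; subst h; omega
          have h2 : r ≠ j := by
            intro h; subst h
            have := hiprop.1
            rw [Fin.lt_def] at this
            omega
          rw [hw'other r h1 h2]; ring
        rw [hdiff, hzero]
        have := hpre k hkm
        linarith
      rcases le_or_gt k (j : ℕ) with hk2 | hk2
      · -- i in, j not in
        have him : i ∈ pref m k := mem_pref.mpr hk1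
        have hsingle : ∑ r ∈ pref m k, (w' r - w r) = w' i - w i := by
          rw [← Finset.sum_singleton (f := fun r => w' r - w r) i]
          apply (Finset.sum_subset (Finset.singleton_subset_iff.mpr him) _).symm
          intro r hr hrns
          have h1 : r ≠ i := by simpa using hrns
          have h2 : r ≠ j := by
            intro h; subst h
            rw [mem_pref] at hr
            omega
          rw [hw'other r h1 h2]; ring
        rw [hdiff, hsingle, hw'i]
        have h6 := hδsum k hkm hk1 hk2
        rw [Finset.sum_sub_distrib] at h6
        linarith
      · -- both i and j in pref k
        have him : i ∈ pref m k := by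
          rw [mem_pref]
          have := hiprop.1
          rw [Fin.lt_def] at this
          omega
        have hjm : j ∈ pref m k := mem_pref.mpr hk2
        have hpair : ∑ r ∈ pref m k, (w' r - w r) = (w' i - w i) + (w' j - w j) := by
          have hp2 : ∑ r ∈ ({i, j} : Finset (Fin m)), (w' r - w r) = (w' i - w i) + (w' j - w j) :=
            Finset.sum_pair hij_ne
          rw [← hp2]
          apply (Finset.sum_subset _ _).symm
          · intro r hr
            rcases Finset.mem_insert.mp hr with h | h
            · exact h ▸ him
            · rw [Finset.mem_singleton] at h
              exact h ▸ hjm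
          · intro r hr hrns
            have h1 : r ≠ i := fun h => hrns (h ▸ Finset.mem_insert_self _ _)
            have h2 : r ≠ j := fun h => hrns (h ▸ Finset.mem_insert_of_mem (Finset.mem_singleton_self _))
            rw [hw'other r h1 h2]; ring
        rw [hdiff, hpair, hw'i, hw'j]
        have := hpre k hkm
        linarith
    have hsum' : ∑ r, x r = ∑ r, w' r := by
      have hpair : ∑ r, (w' r - w r) = (w' i - w i) + (w' j - w j) := by
        have hp2 : ∑ r ∈ ({i, j} : Finset (Fin m)), (w' r - w r) = (w' i - w i) + (w' j - w j) :=
          Finset.sum_pair hij_ne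
        rw [← hp2]
        apply (Finset.sum_subset (Finset.subset_univ _) _).symm
        intro r _ hrns
        have h1 : r ≠ i := fun h => hrns (h ▸ Finset.mem_insert_self _ _)
        have h2 : r ≠ j := fun h => hrns (h ▸ Finset.mem_insert_of_mem (Finset.mem_singleton_self _))
        rw [hw'other r h1 h2]; ring
      have : ∑ r, w' r = ∑ r, w r := by
        have hd : ∑ r, w' r = ∑ r, w r + ∑ r, (w' r - w r) := by
          rw [Finset.sum_sub_distrib]; ring
        rw [hd, hpair, hw'i, hw'j]; ring
      rw [this]; exact hsum
    -- the difference count decreases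
    have hiold : i ∈ Finset.univ.filter (fun r => x r ≠ w r) := by
      simp [ne_of_lt hiprop.2]
    have hjold : j ∈ Finset.univ.filter (fun r => x r ≠ w r) := by
      simp [ne_of_gt hjprop]
    have hcard' : (Finset.univ.filter (fun r => x r ≠ w' r)).card ≤ N := by
      rcases le_total (w i - x i) (x j - w j) with hmin | hmin
      · -- δ = w i - x i, coordinate i gets fixed
        have hδeq : δ = w i - x i := min_eq_left hmin
        have hfix : x i = w' i := by rw [hw'i, hδeq]; ring
        have hsub : (Finset.univ.filter (fun r => x r ≠ w' r)) ⊆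
            (Finset.univ.filter (fun r => x r ≠ w r)).erase i := by
          intro r hr
          rw [Finset.mem_filter] at hr
          rw [Finset.mem_erase, Finset.mem_filter]
          have hri : r ≠ i := by
            intro h; subst h; exact hr.2 hfix
          refine ⟨hri, Finset.mem_univ _, ?_⟩
          by_cases hrj : r = j
          · subst hrj; exact ne_of_gt hjprop
          · rw [← hw'other r hri hrj]; exact hr.2
        calc (Finset.univ.filter (fun r => x r ≠ w' r)).card
            ≤ ((Finset.univ.filter (fun r => x r ≠ w r)).erase i).card := Finset.card_le_card hsub
          _ = (Finset.univ.filter (fun r => x r ≠ w r)).card - 1 := Finset.card_erase_of_mem hiold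
          _ ≤ N := by omega
      · -- δ = x j - w j, coordinate j gets fixed
        have hδeq : δ = x j - w j := min_eq_right hmin
        have hfix : x j = w' j := by rw [hw'j, hδeq]; ring
        have hsub : (Finset.univ.filter (fun r => x r ≠ w' r)) ⊆
            (Finset.univ.filter (fun r => x r ≠ w r)).erase j := by
          intro r hr
          rw [Finset.mem_filter] at hr
          rw [Finset.mem_erase, Finset.mem_filter]
          have hrj : r ≠ j := by
            intro h; subst h; exact hr.2 hfix
          refine ⟨hrj, Finset.mem_univ _, ?_⟩
          by_cases hri : r = i
          · subst hri; exact ne_of_lt hiprop.2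
          · rw [← hw'other r hri hrj]; exact hr.2
        calc (Finset.univ.filter (fun r => x r ≠ w' r)).card
            ≤ ((Finset.univ.filter (fun r => x r ≠ w r)).erase j).card := Finset.card_le_card hsub
          _ = (Finset.univ.filter (fun r => x r ≠ w r)).card - 1 := Finset.card_erase_of_mem hjold
          _ ≤ N := by omega
    -- apply IH and push the hull through
    have hmem' := ih x w' hx hw'anti hpre' hsum' hcard'
    have horb : orbSet w' ⊆ convexHull ℝ (orbSet w) := by
      rintro - ⟨σ, rfl⟩
      have hid : w' ∘ ⇑σ = (1 - c) • (w ∘ ⇑σ) + c • (w ∘ ⇑(σ.trans (Equiv.swap i j))) := by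
        funext r
        simp only [Pi.add_apply, Pi.smul_apply, Function.comp_apply, smul_eq_mul,
          Equiv.trans_apply]
        by_cases h1 : σ r = i
        · rw [h1, hw'i, Equiv.swap_apply_left]
          have : c * (w i - w j) = δ := by
            rw [hc]; field_simp
          linarith [this]
        by_cases h2 : σ r = j
        · rw [h2, hw'j, Equiv.swap_apply_right]
          have : c * (w i - w j) = δ := by
            rw [hc]; field_simp
          nlinarith [this]
        · rw [hw'other _ h1 h2, Equiv.swap_apply_of_ne_of_ne h1 h2]
          ring
      rw [hid]
      have hm1 : (w ∘ ⇑σ) ∈ convexHull ℝ (orbSet w) :=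
        subset_convexHull ℝ _ ⟨σ, rfl⟩
      have hm2 : (w ∘ ⇑(σ.trans (Equiv.swap i j))) ∈ convexHull ℝ (orbSet w) :=
        subset_convexHull ℝ _ ⟨σ.trans (Equiv.swap i j), rfl⟩
      exact (convex_convexHull ℝ (orbSet w)) hm1 hm2 (by linarith) (le_of_lt hc0) (by ring)
    have hsubhull : convexHull ℝ (orbSet w') ⊆ convexHull ℝ (orbSet w) :=
      convexHull_min horb (convex_convexHull ℝ _)
    exact hsubhull hmem'

/-- Rado's theorem: if all partial "top" sums of `x` are dominated by the prefix sums
of the antitone vector `w`, and the total sums agree, then `x` lies in the convex hull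
of the orbit of `w`. -/
theorem rado {x w : Fin m → ℝ}
    (hw : ∀ i j : Fin m, i ≤ j → w j ≤ w i)
    (hx : ∀ T : Finset (Fin m), ∑ i ∈ T, x i ≤ ∑ i ∈ pref m T.card, w i)
    (hsum : ∑ i, x i = ∑ i, w i) :
    x ∈ convexHull ℝ (orbSet w) := by
  classical
  set π : Equiv.Perm (Fin m) := Fin.revPerm.trans (Tuple.sort x) with hπdef
  have hxs : ∀ r s : Fin m, r ≤ s → (x ∘ ⇑π) s ≤ (x ∘ ⇑π) r := by
    intro r s hrs
    have h1 : Fin.rev s ≤ Fin.rev r := Fin.rev_le_rev.mpr hrs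
    have h2 := Tuple.monotone_sort x h1
    simpa [hπdef] using h2
  have hpre2 : ∀ k, k ≤ m → ∑ i ∈ pref m k, (x ∘ ⇑π) i ≤ ∑ i ∈ pref m k, w i := by
    intro k hk
    have himg : ∑ i ∈ pref m k, (x ∘ ⇑π) i = ∑ i ∈ (pref m k).image ⇑π, x i := by
      rw [Finset.sum_image (fun a _ b _ h => π.injective h)]
      rfl
    rw [himg]
    have hcard : ((pref m k).image ⇑π).card = k := by
      rw [Finset.card_image_of_injective _ π.injective, pref_card hk]
    have h3 := hx ((pref m k).image ⇑π)
    rw [hcard] at h3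
    exact h3
  have hsum2 : ∑ i, (x ∘ ⇑π) i = ∑ i, w i := by
    rw [← hsum]
    exact Equiv.sum_comp π x
  have hcore := rado_sorted (m := m)
    (Finset.univ.filter (fun i => (x ∘ ⇑π) i ≠ w i)).card (x ∘ ⇑π) w hxs hw hpre2 hsum2 (le_refl _)
  have hperm := convexHull_perm (S := orbSet w) (fun z hz τ => orbSet_perm hz τ) hcore π.symm
  have hcomp : (x ∘ ⇑π) ∘ ⇑π.symm = x := by
    funext r
    simp
  rwa [hcomp] at hperm




namespace IDPProof

variable (m h : ℕ) (lam : Fin m → ℕ)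

/-- `lam` padded to `ℕ`. -/
def lamN : ℕ → ℕ := fun i => if hi : i < m then lam ⟨i, hi⟩ else 0

/-- The maximal partition `ν`. -/
def nuN : ℕ → ℕ
  | 0 => lamN m lam 0
  | (i+1) => min (lamN m lam (i+1) + h * (i+1)) (nuN i)

/-- Prefix sums of `ν`. -/
def Vf (k : ℕ) : ℕ := ∑ j ∈ range (min k m), nuN m h lam j

/-- Suffix sums of `λ`. -/
def Lf (k : ℕ) : ℕ := ∑ j ∈ (range m).filter (fun j => k ≤ j), lamN m lam j

variable {m h lam}

lemma lamN_val (i : Fin m) : lamN m lam i.1 = lam i := by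
  simp [lamN, i.2]

lemma lamN_anti (hlam : IsPartition m lam) : ∀ i j, i ≤ j → lamN m lam j ≤ lamN m lam i := by
  intro i j hij
  unfold lamN
  by_cases hj : j < m
  · have hi : i < m := lt_of_le_of_lt hij hj
    simp only [hi, hj, dif_pos]
    exact hlam ⟨i, hi⟩ ⟨j, hj⟩ hij
  · rw [dif_neg hj]
    exact Nat.zero_le _

lemma nuN_anti_succ (i : ℕ) : nuN m h lam (i+1) ≤ nuN m h lam i :=
  min_le_right (lamN m lam (i+1) + h * (i+1)) (nuN m h lam i)

lemma nuN_anti : ∀ i j, i ≤ j → nuN m h lam j ≤ nuN m h lam i := by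
  intro i j hij
  induction j with
  | zero =>
    have : i = 0 := Nat.le_zero.mp hij
    subst this
    exact le_refl _
  | succ j ih =>
    rcases Nat.lt_or_ge i (j+1) with hlt | hge
    · exact le_trans (nuN_anti_succ j) (ih (by omega))
    · have : i = j + 1 := by omega
      subst this; exact le_refl _

lemma lamN_le_nuN (hlam : IsPartition m lam) : ∀ i, lamN m lam i ≤ nuN m h lam i := by
  intro i
  induction i with
  | zero => exact le_refl _
  | succ i ih =>
    unfold nuN
    apply le_min
    · omega
    · exact le_trans (lamN_anti hlam i (i+1) (by omega)) ih

lemma nuN_le_lamN_add (i : ℕ) : nuN m h lam i ≤ lamN m lam i + h * i := by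
  cases i with
  | zero => simp [nuN]
  | succ i => exact min_le_left _ _

/-- Extraction: a skew filling forces the row-length bound. -/
lemma amem_row_bound {mu : Fin m → ℕ} (hA : AMem m h lam mu) (i : Fin m) :
    mu i ≤ lam i + h * i.1 := by
  obtain ⟨hpart, hle, ⟨f⟩⟩ := hA
  by_cases hmu : mu i ≤ lam i
  · omega
  push_neg at hmu
  have key : ∀ s, s < mu i - lam i → s + 1 ≤ f.entry i (lam i + s) := by
    intro s
    induction s with
    | zero =>
      intro hs
      exact f.one_le i (lam i) (le_refl _) (by omega)
    | succ s ih =>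
      intro hs
      have h1 := ih (by omega)
      have h2 := f.row_strict i (lam i + s) (lam i + s + 1) (by omega) (by omega) (by omega)
      show s + 1 + 1 ≤ f.entry i (lam i + s + 1)
      omega
  have h3 := key (mu i - lam i - 1) (by omega)
  have h4 := f.upper i (lam i + (mu i - lam i - 1)) (by omega) (by omega)
  omega

lemma amem_le_nuN {mu : Fin m → ℕ} (hA : AMem m h lam mu) :
    ∀ j (hj : j < m), mu ⟨j, hj⟩ ≤ nuN m h lam j := by
  intro j
  induction j with
  | zero =>
    intro hj
    have h1 : mu ⟨0, hj⟩ ≤ lam ⟨0, hj⟩ + h * 0 := amem_row_bound hA ⟨0, hj⟩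
    have hl : lamN m lam 0 = lam ⟨0, hj⟩ := lamN_val ⟨0, hj⟩
    show mu ⟨0, hj⟩ ≤ lamN m lam 0
    omega
  | succ j ih =>
    intro hj
    have hj' : j < m := by omega
    have h1 : mu ⟨j+1, hj⟩ ≤ lam ⟨j+1, hj⟩ + h * (j+1) := amem_row_bound hA ⟨j+1, hj⟩
    have h2 : mu ⟨j+1, hj⟩ ≤ mu ⟨j, hj'⟩ := hA.1 ⟨j, hj'⟩ ⟨j+1, hj⟩ (by simp [Fin.le_def])
    have h3 := ih hj'
    have hl : lamN m lam (j+1) = lam ⟨j+1, hj⟩ := lamN_val ⟨j+1, hj⟩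
    show mu ⟨j+1, hj⟩ ≤ min (lamN m lam (j+1) + h * (j+1)) (nuN m h lam j)
    rw [hl]
    exact le_min (by omega) (by omega)

/-- Construction: any partition between `λ` and `ν` admits a skew filling. -/
lemma amem_of_between (hh : 1 ≤ h) (hlam : IsPartition m lam) {mu : Fin m → ℕ}
    (hpart : IsPartition m mu) (hge : ∀ i, lam i ≤ mu i)
    (hle : ∀ i : Fin m, mu i ≤ nuN m h lam i.1) :
    AMem m h lam mu := by
  refine ⟨hpart, hge, ⟨⟨fun i j => h * i.1 + (j + 1) - mu i, ?_, ?_, ?_, ?_⟩⟩⟩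
  · intro i j hj1 hj2
    have h1 : mu i ≤ lam i + h * i.1 := by
      have := le_trans (hle i) (nuN_le_lamN_add i.1)
      rw [lamN_val i] at this
      exact this
    show 1 ≤ h * i.1 + (j + 1) - mu i
    omega
  · intro i j hj1 hj2
    show h * i.1 + (j + 1) - mu i ≤ h * i.1
    omega
  · intro i j k hj1 hjk hk
    have h1 : mu i ≤ lam i + h * i.1 := by
      have := le_trans (hle i) (nuN_le_lamN_add i.1)
      rw [lamN_val i] at this
      exact this
    show h * i.1 + (j + 1) - mu i < h * i.1 + (k + 1) - mu i
    omega
  · intro i k j hik hj1 hj2 hj3 hj4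
    have h1 : mu i ≤ lam i + h * i.1 := by
      have := le_trans (hle i) (nuN_le_lamN_add i.1)
      rw [lamN_val i] at this
      exact this
    have h2 : mu k ≤ mu i := hpart i k (le_of_lt hik)
    have h3 : h * i.1 + h ≤ h * k.1 := by
      have hik' : i.1 + 1 ≤ k.1 := hik
      calc h * i.1 + h = h * (i.1 + 1) := by ring
        _ ≤ h * k.1 := Nat.mul_le_mul_left h hik'
    show h * i.1 + (j + 1) - mu i < h * k.1 + (j + 1) - mu k
    omega

/-! ### Prefix/suffix sum functions -/

lemma Vf_zero : Vf m h lam 0 = 0 := by simp [Vf]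

lemma Vf_succ {k : ℕ} (hk : k < m) :
    Vf m h lam (k+1) = Vf m h lam k + nuN m h lam k := by
  unfold Vf
  rw [Nat.min_eq_left (by omega : k + 1 ≤ m), Nat.min_eq_left (by omega : k ≤ m),
    Finset.sum_range_succ]

lemma Vf_mono : ∀ k k', k ≤ k' → Vf m h lam k ≤ Vf m h lam k' := by
  intro k k' hkk
  unfold Vf
  apply Finset.sum_le_sum_of_subset
  intro x hx
  rw [Finset.mem_range] at hx ⊢
  omega

lemma Vf_stab {k : ℕ} (hk : m ≤ k) : Vf m h lam k = Vf m h lam m := by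
  unfold Vf
  rw [Nat.min_eq_right hk, Nat.min_self]

lemma Lf_of_ge {k : ℕ} (hk : m ≤ k) : Lf m lam k = 0 := by
  unfold Lf
  have hemp : (range m).filter (fun j => k ≤ j) = ∅ := by
    apply Finset.filter_false_of_mem
    intro j hj
    rw [Finset.mem_range] at hj
    omega
  rw [hemp, Finset.sum_empty]

lemma Lf_succ {k : ℕ} (hk : k < m) :
    Lf m lam k = lamN m lam k + Lf m lam (k+1) := by
  unfold Lf
  have hins : (range m).filter (fun j => k ≤ j)
      = insert k ((range m).filter (fun j => k + 1 ≤ j)) := by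
    ext x
    simp only [Finset.mem_filter, Finset.mem_insert, Finset.mem_range]
    omega
  rw [hins, Finset.sum_insert (by simp)]

lemma Lf_anti : ∀ k k', k ≤ k' → Lf m lam k' ≤ Lf m lam k := by
  intro k k' hkk
  unfold Lf
  apply Finset.sum_le_sum_of_subset
  intro x hx
  rw [Finset.mem_filter, Finset.mem_range] at hx ⊢
  omega

lemma Lf_eq_range {k : ℕ} (hk : k ≤ m) :
    Lf m lam k = ∑ j ∈ range (m - k), lamN m lam (k + j) := by
  unfold Lf
  rw [Finset.sum_nbij' (fun x => x - k) (fun x => k + x)]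
  · intro a ha
    rw [Finset.mem_filter, Finset.mem_range] at ha
    rw [Finset.mem_range]
    omega
  · intro a ha
    rw [Finset.mem_range] at ha
    rw [Finset.mem_filter, Finset.mem_range]
    omega
  · intro a ha
    rw [Finset.mem_filter] at ha
    omega
  · intro a _
    omega
  · intro a ha
    rw [Finset.mem_filter] at ha
    congr 1
    omega

/-- The convex region containing the Newton polytope. -/
def Cset (m h : ℕ) (lam : Fin m → ℕ) : Set (Fin m → ℝ) :=
  {x | (∀ i, 0 ≤ x i) ∧ (∀ T : Finset (Fin m), ∑ i ∈ T, x i ≤ (Vf m h lam T.card : ℝ)) ∧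
    (∀ T : Finset (Fin m), (Lf m lam T.card : ℝ) ≤ ∑ i ∈ Tᶜ, x i)}

lemma convex_Cset : Convex ℝ (Cset m h lam) := by
  intro x hx y hy a b ha hb hab
  obtain ⟨hx1, hx2, hx3⟩ := hx
  obtain ⟨hy1, hy2, hy3⟩ := hy
  refine ⟨?_, ?_, ?_⟩
  · intro i
    have := hx1 i
    have := hy1 i
    simp only [Pi.add_apply, Pi.smul_apply, smul_eq_mul]
    nlinarith
  · intro T
    have h1 := hx2 T
    have h2 := hy2 T
    have h3 : ∑ i ∈ T, (a • x + b • y) i = a * ∑ i ∈ T, x i + b * ∑ i ∈ T, y i := by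
      simp only [Pi.add_apply, Pi.smul_apply, smul_eq_mul]
      rw [Finset.sum_add_distrib, Finset.mul_sum, Finset.mul_sum]
    rw [h3]
    nlinarith
  · intro T
    have h1 := hx3 T
    have h2 := hy3 T
    have h3 : ∑ i ∈ Tᶜ, (a • x + b • y) i = a * ∑ i ∈ Tᶜ, x i + b * ∑ i ∈ Tᶜ, y i := by
      simp only [Pi.add_apply, Pi.smul_apply, smul_eq_mul]
      rw [Finset.sum_add_distrib, Finset.mul_sum, Finset.mul_sum]
    rw [h3]
    nlinarith

/-- Generators of the Newton polytope lie in `Cset`. -/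
lemma gen_mem_Cset (hlam : IsPartition m lam) {mu : Fin m → ℕ} (hA : AMem m h lam mu)
    (σ : Equiv.Perm (Fin m)) :
    (fun i => (mu (σ i) : ℝ)) ∈ Cset m h lam := by
  classical
  have hcardle : ∀ T : Finset (Fin m), T.card ≤ m := fun T => by
    simpa using T.card_le_card (subset_univ T)
  refine ⟨fun i => by positivity, ?_, ?_⟩
  · intro T
    have himg : ∑ i ∈ T, (mu (σ i) : ℝ) = ((∑ i ∈ T.image ⇑σ, mu i : ℕ) : ℝ) := by
      push_cast
      rw [Finset.sum_image (fun a _ b _ hab => σ.injective hab)]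
    rw [himg]
    have hcard : (T.image ⇑σ).card = T.card := Finset.card_image_of_injective _ σ.injective
    have hsub := subset_sum_le_prefix (w := mu) hA.1 (T.image ⇑σ) (lamN m mu)
      (fun i => lamN_val i)
    rw [hcard] at hsub
    have hnu : ∑ j ∈ range T.card, lamN m mu j ≤ ∑ j ∈ range T.card, nuN m h lam j := by
      apply Finset.sum_le_sum
      intro j hj
      rw [Finset.mem_range] at hj
      have hjm : j < m := lt_of_lt_of_le hj (hcardle T)
      have h1 : lamN m mu j = mu ⟨j, hjm⟩ := by simp [lamN, hjm]
      rw [h1]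
      exact amem_le_nuN hA j hjm
    have hV : Vf m h lam T.card = ∑ j ∈ range T.card, nuN m h lam j := by
      unfold Vf
      rw [Nat.min_eq_left (hcardle T)]
    rw [hV]
    exact_mod_cast le_trans hsub hnu
  · intro T
    have himg : ∑ i ∈ Tᶜ, (mu (σ i) : ℝ) = ((∑ i ∈ Tᶜ.image ⇑σ, mu i : ℕ) : ℝ) := by
      push_cast
      rw [Finset.sum_image (fun a _ b _ hab => σ.injective hab)]
    rw [himg]
    have hcardc : (Tᶜ.image ⇑σ).card = m - T.card := by
      rw [Finset.card_image_of_injective _ σ.injective, Finset.card_compl]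
      simp
    have hsub := subset_sum_ge_suffix (w := mu) hA.1 (Tᶜ.image ⇑σ) (lamN m mu)
      (fun i => lamN_val i)
    rw [hcardc] at hsub
    have hmm : m - (m - T.card) = T.card := by
      have := hcardle T
      omega
    rw [hmm] at hsub
    have hlmu : ∑ j ∈ range (m - T.card), lamN m lam (T.card + j)
        ≤ ∑ j ∈ range (m - T.card), lamN m mu (T.card + j) := by
      apply Finset.sum_le_sum
      intro j _
      unfold lamN
      by_cases hjm : T.card + j < m
      · simp only [hjm, dif_pos]
        exact hA.2.1 _
      · simp [hjm]
    have hL := Lf_eq_range (lam := lam) (hcardle T)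
    rw [hL]
    exact_mod_cast le_trans hlmu hsub

/-! ### The greedy partition of degree `d` -/

/-- The concave prefix bound for degree `d`. -/
def phiD (m h : ℕ) (lam : Fin m → ℕ) (d : ℕ) (k : ℕ) : ℤ :=
  min (Vf m h lam k : ℤ) ((d : ℤ) - Lf m lam k)

section PhiD

variable {d : ℕ} (hd1 : Lf m lam 0 ≤ d) (hd2 : d ≤ Vf m h lam m)

include hd1 in
lemma phiD_zero : phiD m h lam d 0 = 0 := by
  unfold phiD
  rw [Vf_zero]
  have : (Lf m lam 0 : ℤ) ≤ (d : ℤ) := by exact_mod_cast hd1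
  omega

include hd2 in
lemma phiD_m : phiD m h lam d m = (d : ℤ) := by
  unfold phiD
  rw [Lf_of_ge (le_refl m)]
  have : (d : ℤ) ≤ (Vf m h lam m : ℤ) := by exact_mod_cast hd2
  omega

include hd1 in
lemma phiD_nonneg (k : ℕ) : 0 ≤ phiD m h lam d k := by
  unfold phiD
  have h1 : (0 : ℤ) ≤ (Vf m h lam k : ℤ) := by positivity
  have h2 : (Lf m lam k : ℤ) ≤ (Lf m lam 0 : ℤ) := by
    exact_mod_cast Lf_anti 0 k (Nat.zero_le k)
  have h3 : (Lf m lam 0 : ℤ) ≤ (d : ℤ) := by exact_mod_cast hd1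
  omega

lemma phiD_mono {k k' : ℕ} (hkk : k ≤ k') : phiD m h lam d k ≤ phiD m h lam d k' := by
  unfold phiD
  have h1 : (Vf m h lam k : ℤ) ≤ (Vf m h lam k' : ℤ) := by
    exact_mod_cast Vf_mono k k' hkk
  have h2 : (Lf m lam k' : ℤ) ≤ (Lf m lam k : ℤ) := by
    exact_mod_cast Lf_anti k k' hkk
  omega

lemma phiD_step_up (hlam : IsPartition m lam) {k : ℕ} (hk : k < m) :
    phiD m h lam d (k+1) ≤ phiD m h lam d k + (nuN m h lam k : ℤ) := by
  unfold phiD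
  have h1 : (Vf m h lam (k+1) : ℤ) = (Vf m h lam k : ℤ) + (nuN m h lam k : ℤ) := by
    exact_mod_cast congrArg (Nat.cast : ℕ → ℤ) (Vf_succ hk)
  have h2 : (Lf m lam k : ℤ) = (lamN m lam k : ℤ) + (Lf m lam (k+1) : ℤ) := by
    exact_mod_cast congrArg (Nat.cast : ℕ → ℤ) (Lf_succ hk)
  have h3 : (lamN m lam k : ℤ) ≤ (nuN m h lam k : ℤ) := by
    exact_mod_cast lamN_le_nuN hlam k
  omega

lemma phiD_step_lo (hlam : IsPartition m lam) {k : ℕ} (hk : k < m) :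
    phiD m h lam d k + (lamN m lam k : ℤ) ≤ phiD m h lam d (k+1) := by
  unfold phiD
  have h1 : (Vf m h lam (k+1) : ℤ) = (Vf m h lam k : ℤ) + (nuN m h lam k : ℤ) := by
    exact_mod_cast congrArg (Nat.cast : ℕ → ℤ) (Vf_succ hk)
  have h2 : (Lf m lam k : ℤ) = (lamN m lam k : ℤ) + (Lf m lam (k+1) : ℤ) := by
    exact_mod_cast congrArg (Nat.cast : ℕ → ℤ) (Lf_succ hk)
  have h3 : (lamN m lam k : ℤ) ≤ (nuN m h lam k : ℤ) := by
    exact_mod_cast lamN_le_nuN hlam k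
  omega

lemma phiD_concave (hlam : IsPartition m lam) (k : ℕ) :
    phiD m h lam d (k+2) + phiD m h lam d k ≤ 2 * phiD m h lam d (k+1) := by
  have hV : (Vf m h lam (k+2) : ℤ) + (Vf m h lam k : ℤ) ≤ 2 * (Vf m h lam (k+1) : ℤ) := by
    rcases lt_or_ge (k+1) m with hk1 | hk1
    · have hk0 : k < m := by omega
      have e1 : Vf m h lam (k+2) = Vf m h lam (k+1) + nuN m h lam (k+1) := Vf_succ hk1
      have e2 : Vf m h lam (k+1) = Vf m h lam k + nuN m h lam k := Vf_succ hk0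
      have e3 : nuN m h lam (k+1) ≤ nuN m h lam k := nuN_anti_succ k
      push_cast [e1, e2]
      push_cast at e3
      omega
    · have e1 : Vf m h lam (k+2) = Vf m h lam m := Vf_stab (by omega)
      have e2 : Vf m h lam (k+1) = Vf m h lam m := Vf_stab (by omega)
      have e3 : Vf m h lam k ≤ Vf m h lam m := by
        unfold Vf
        apply Finset.sum_le_sum_of_subset
        intro x hx
        rw [Finset.mem_range] at hx ⊢
        omega
      push_cast [e1, e2]
      push_cast at e3
      omega
  have hL : (Lf m lam (k+2) : ℤ) + (Lf m lam k : ℤ) ≥ 2 * (Lf m lam (k+1) : ℤ) := by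
    rcases lt_or_ge (k+1) m with hk1 | hk1
    · have hk0 : k < m := by omega
      have e1 : Lf m lam k = lamN m lam k + Lf m lam (k+1) := Lf_succ hk0
      have e2 : Lf m lam (k+1) = lamN m lam (k+1) + Lf m lam (k+2) := Lf_succ hk1
      have e3 : lamN m lam (k+1) ≤ lamN m lam k := lamN_anti hlam k (k+1) (by omega)
      push_cast [e1, e2]
      push_cast at e3
      omega
    · have e1 : Lf m lam (k+2) = 0 := Lf_of_ge (by omega)
      have e2 : Lf m lam (k+1) = 0 := Lf_of_ge (by omega)
      push_cast [e1, e2]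
      positivity
  unfold phiD
  omega

lemma phiD_inc_anti (hlam : IsPartition m lam) : ∀ k k', k ≤ k' →
    phiD m h lam d (k'+1) - phiD m h lam d k' ≤ phiD m h lam d (k+1) - phiD m h lam d k := by
  intro k k' hkk
  induction k' with
  | zero =>
    have : k = 0 := Nat.le_zero.mp hkk
    subst this
    omega
  | succ j ih =>
    rcases Nat.lt_or_ge k (j+1) with hlt | hge
    · have h1 := ih (by omega)
      have h2 : phiD m h lam d (j+1+1) + phiD m h lam d j ≤ 2 * phiD m h lam d (j+1) :=
        phiD_concave (m := m) (h := h) (lam := lam) (d := d) hlam j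
      omega
    · have : k = j + 1 := by omega
      subst this
      omega

end PhiD

/-- The greedy partition of degree `d`. -/
def MuD (m h : ℕ) (lam : Fin m → ℕ) (d : ℕ) : Fin m → ℕ :=
  fun i => (phiD m h lam d (i.1+1) - phiD m h lam d i.1).toNat

section MuD

variable {d : ℕ}

lemma MuD_cast (i : Fin m) :
    ((MuD m h lam d i : ℤ)) = phiD m h lam d (i.1+1) - phiD m h lam d i.1 := by
  unfold MuD
  rw [Int.toNat_of_nonneg]
  have h0 : phiD m h lam d i.1 ≤ phiD m h lam d (i.1+1) :=
    phiD_mono (m := m) (h := h) (lam := lam) (d := d) (by omega)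
  omega

lemma MuD_partition (hlam : IsPartition m lam) : IsPartition m (MuD m h lam d) := by
  intro i j hij
  have hij' : i.1 ≤ j.1 := hij
  have h1 := phiD_inc_anti (m := m) (h := h) (lam := lam) (d := d) hlam i.1 j.1 hij'
  have h2 := MuD_cast (m := m) (h := h) (lam := lam) (d := d) i
  have h3 := MuD_cast (m := m) (h := h) (lam := lam) (d := d) j
  omega

lemma MuD_ge_lam (hlam : IsPartition m lam) (i : Fin m) : lam i ≤ MuD m h lam d i := by
  have h1 : phiD m h lam d i.1 + (lamN m lam i.1 : ℤ) ≤ phiD m h lam d (i.1+1) :=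
    phiD_step_lo (m := m) (h := h) (lam := lam) (d := d) hlam i.2
  have h2 := MuD_cast (m := m) (h := h) (lam := lam) (d := d) i
  have h3 : lamN m lam i.1 = lam i := lamN_val i
  rw [h3] at h1
  omega

lemma MuD_le_nu (hlam : IsPartition m lam) (i : Fin m) : MuD m h lam d i ≤ nuN m h lam i.1 := by
  have h1 : phiD m h lam d (i.1+1) ≤ phiD m h lam d i.1 + (nuN m h lam i.1 : ℤ) :=
    phiD_step_up (m := m) (h := h) (lam := lam) (d := d) hlam i.2
  have h2 := MuD_cast (m := m) (h := h) (lam := lam) (d := d) i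
  omega

lemma MuD_prefix (hd1 : Lf m lam 0 ≤ d) :
    ∀ k, k ≤ m → ∑ i ∈ pref m k, ((MuD m h lam d i : ℤ)) = phiD m h lam d k := by
  intro k
  induction k with
  | zero =>
    intro _
    rw [phiD_zero hd1]
    simp [pref]
  | succ k ih =>
    intro hk
    have hkm : k < m := hk
    have hc : ((MuD m h lam d ⟨k, hkm⟩ : ℤ)) = phiD m h lam d (k+1) - phiD m h lam d k :=
      MuD_cast ⟨k, hkm⟩
    rw [pref_succ_eq_insert hkm, Finset.sum_insert (self_not_mem_pref hkm),
      ih (le_of_lt hkm), hc]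
    ring

lemma MuD_sum (hd1 : Lf m lam 0 ≤ d) (hd2 : d ≤ Vf m h lam m) :
    ∑ i, ((MuD m h lam d i : ℤ)) = (d : ℤ) := by
  have h1 := MuD_prefix (m := m) (h := h) (lam := lam) (d := d) hd1 m (le_refl m)
  rw [pref_univ] at h1
  rw [h1, phiD_m hd2]

lemma MuD_AMem (hh : 1 ≤ h) (hlam : IsPartition m lam) : AMem m h lam (MuD m h lam d) :=
  amem_of_between hh hlam (MuD_partition hlam) (MuD_ge_lam hlam) (MuD_le_nu hlam)

end MuD

end IDPProof

/-! ### Conjugate cell counting -/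

lemma initial_seg {S : Finset ℕ} (hdc : ∀ i' ∈ S, ∀ i, i ≤ i' → i ∈ S) :
    S = range S.card := by
  have h1 : ∀ i ∈ S, i < S.card := by
    intro i hi
    have hsub : range (i+1) ⊆ S := by
      intro x hx
      rw [Finset.mem_range] at hx
      exact hdc i hi x (by omega)
    have := Finset.card_le_card hsub
    rw [Finset.card_range] at this
    omega
  have h2 : ∀ i, i < S.card → i ∈ S := by
    intro i hic
    by_contra hiS
    have hsub : S ⊆ range i := by
      intro x hx
      rw [Finset.mem_range]
      by_contra hxi
      exact hiS (hdc x hx i (by omega))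
    have := Finset.card_le_card hsub
    rw [Finset.card_range] at this
    omega
  ext i
  rw [Finset.mem_range]
  exact ⟨h1 i, h2 i⟩

lemma cell_count {g : ℕ → ℕ} {m B : ℕ}
    (hg : ∀ i j, i ≤ j → g j ≤ g i) (hB : ∀ i, g i ≤ B) :
    ∀ k, k ≤ m → ∑ i ∈ range k, g i
      = ∑ j ∈ range B, min k (((range m).filter (fun i => j < g i)).card) := by
  intro k hk
  have hgi : ∀ i, g i = ∑ j ∈ range B, (if j < g i then 1 else 0) := by
    intro i
    rw [← Finset.card_filter]
    have hr : (range B).filter (fun j => j < g i) = range (g i) := by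
      ext x
      simp only [Finset.mem_filter, Finset.mem_range]
      have := hB i
      omega
    rw [hr, Finset.card_range]
  calc ∑ i ∈ range k, g i
      = ∑ i ∈ range k, ∑ j ∈ range B, (if j < g i then 1 else 0) :=
        Finset.sum_congr rfl (fun i _ => hgi i)
    _ = ∑ j ∈ range B, ∑ i ∈ range k, (if j < g i then 1 else 0) := Finset.sum_comm
    _ = ∑ j ∈ range B, ((range k).filter (fun i => j < g i)).card := by
        apply Finset.sum_congr rfl
        intro j _
        rw [Finset.card_filter]
    _ = ∑ j ∈ range B, min k (((range m).filter (fun i => j < g i)).card) := by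
        apply Finset.sum_congr rfl
        intro j _
        have hdc : ∀ i' ∈ (range m).filter (fun i => j < g i), ∀ i, i ≤ i' →
            i ∈ (range m).filter (fun i => j < g i) := by
          intro i' hi' i hii'
          rw [Finset.mem_filter, Finset.mem_range] at hi' ⊢
          refine ⟨by omega, ?_⟩
          have := hg i i' hii'
          omega
        have hseg := initial_seg hdc
        have hfe : (range k).filter (fun i => j < g i)
            = range (min k (((range m).filter (fun i => j < g i)).card)) := by
          ext i
          simp only [Finset.mem_filter, Finset.mem_range]
          constructor
          · rintro ⟨h1, h2⟩
            have hmem : i ∈ (range m).filter (fun i => j < g i) := by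
              rw [Finset.mem_filter, Finset.mem_range]
              exact ⟨by omega, h2⟩
            rw [hseg, Finset.mem_range] at hmem
            omega
          · intro h1
            have h2 : i ∈ range (((range m).filter (fun i => j < g i)).card) := by
              rw [Finset.mem_range]
              omega
            rw [← hseg, Finset.mem_filter, Finset.mem_range] at h2
            exact ⟨by omega, h2.2⟩
        rw [hfe, Finset.card_range]

open IDPProof

/-- The Newton polytope of every inflated symmetric Grothendieck polynomial `G_{h,λ}`
has the integer decomposition property: for every positive integer `t`, every lattice
point of the `t`-th dilate is a sum of `t` lattice points of the polytope. -/
theorem newtG_IDP (m h : ℕ) (hh : 1 ≤ h) (lam : Fin m → ℕ) (hlam : IsPartition m lam)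
    (t : ℕ) (ht : 1 ≤ t) (p : Fin m → ℤ)
    (hp : (fun i => (p i : ℝ)) ∈ (t : ℝ) • NewtG m h lam) :
    ∃ v : Fin t → Fin m → ℤ,
      (∀ a : Fin t, (fun i => (v a i : ℝ)) ∈ NewtG m h lam) ∧ p = ∑ a, v a := by
  classical
  -- Step 1: unpack the dilate membership
  obtain ⟨y, hy, hty⟩ := Set.mem_smul_set.mp hp
  -- Step 2: Newton polytope is contained in the convex region Cset
  have hNC : NewtG m h lam ⊆ Cset m h lam := by
    apply convexHull_min _ (convex_Cset (m := m) (h := h) (lam := lam))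
    rintro x ⟨mu, hAmu, σ, rfl⟩
    exact gen_mem_Cset hlam hAmu σ
  obtain ⟨hy1, hy2, hy3⟩ := hNC hy
  have hpy : ∀ i, (p i : ℝ) = (t : ℝ) * y i := by
    intro i
    have := congrFun hty i
    simpa [smul_eq_mul] using this.symm
  have htR : (0 : ℝ) ≤ (t : ℝ) := by positivity
  have hp0 : ∀ i, 0 ≤ p i := by
    intro i
    have h1 : (0 : ℝ) ≤ (p i : ℝ) := by
      rw [hpy i]
      exact mul_nonneg htR (hy1 i)
    exact_mod_cast h1
  set P : Fin m → ℕ := fun i => (p i).toNat with hP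
  have hPcast : ∀ i, ((P i : ℤ)) = p i := fun i => Int.toNat_of_nonneg (hp0 i)
  have hPR : ∀ i, ((P i : ℝ)) = (t : ℝ) * y i := by
    intro i
    rw [← hpy i]
    have := hPcast i
    exact_mod_cast congrArg (Int.cast : ℤ → ℝ) this
  have hcardle : ∀ T : Finset (Fin m), T.card ≤ m := fun T => by
    simpa using T.card_le_card (Finset.subset_univ T)
  -- Step 3: the scaled inequalities, in ℕ
  have hupper : ∀ T : Finset (Fin m), ∑ i ∈ T, P i ≤ t * Vf m h lam T.card := by
    intro T
    have h1 := hy2 T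
    have h2 : ((∑ i ∈ T, P i : ℕ) : ℝ) ≤ ((t * Vf m h lam T.card : ℕ) : ℝ) := by
      push_cast
      calc ∑ i ∈ T, ((P i : ℝ)) = ∑ i ∈ T, (t : ℝ) * y i :=
            Finset.sum_congr rfl (fun i _ => hPR i)
        _ = (t : ℝ) * ∑ i ∈ T, y i := by rw [Finset.mul_sum]
        _ ≤ (t : ℝ) * (Vf m h lam T.card : ℝ) := by
            apply mul_le_mul_of_nonneg_left h1 htR
    exact_mod_cast h2
  have hlower : ∀ T : Finset (Fin m), t * Lf m lam T.card ≤ ∑ i ∈ Tᶜ, P i := by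
    intro T
    have h1 := hy3 T
    have h2 : ((t * Lf m lam T.card : ℕ) : ℝ) ≤ ((∑ i ∈ Tᶜ, P i : ℕ) : ℝ) := by
      push_cast
      calc (t : ℝ) * (Lf m lam T.card : ℝ) ≤ (t : ℝ) * ∑ i ∈ Tᶜ, y i :=
            mul_le_mul_of_nonneg_left h1 htR
        _ = ∑ i ∈ Tᶜ, (t : ℝ) * y i := by rw [Finset.mul_sum]
        _ = ∑ i ∈ Tᶜ, ((P i : ℝ)) := Finset.sum_congr rfl (fun i _ => (hPR i).symm)
    exact_mod_cast h2
  -- Step 4: the total degree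
  set D : ℕ := ∑ i, P i with hD
  have hD1 : t * Lf m lam 0 ≤ D := by
    have h1 := hlower ∅
    simpa using h1
  have hD2 : D ≤ t * Vf m h lam m := by
    have h1 := hupper Finset.univ
    have hcu : (Finset.univ : Finset (Fin m)).card = m := by
      rw [Finset.card_univ, Fintype.card_fin]
    rw [hcu] at h1
    exact h1
  -- Step 5: the balanced degrees
  set dd : Fin t → ℕ := fun a => D / t + (if (a : ℕ) < D % t then 1 else 0) with hdd
  have htpos : 0 < t := ht
  have hmodlt : D % t < t := Nat.mod_lt _ htpos
  have hddsum : ∑ a, dd a = D := by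
    rw [hdd]
    rw [Finset.sum_add_distrib, Finset.sum_const, Finset.card_univ, Fintype.card_fin,
      smul_eq_mul]
    have h1 : (pref t (D % t)).card = ∑ a : Fin t, (if (a : ℕ) < D % t then 1 else 0) := by
      rw [pref, Finset.card_filter]
    rw [← h1, pref_card (le_of_lt hmodlt)]
    have := Nat.div_add_mod D t
    omega
  have hdd1 : ∀ a, Lf m lam 0 ≤ dd a := by
    intro a
    have h1 : Lf m lam 0 ≤ D / t := by
      rw [Nat.le_div_iff_mul_le htpos, mul_comm]
      exact hD1
    rw [hdd]
    by_cases hr : (a : ℕ) < D % t <;> simp only [hr, if_true, if_false] <;> omega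
  have hdd2 : ∀ a, dd a ≤ Vf m h lam m := by
    intro a
    have hdiv : D / t ≤ Vf m h lam m := by
      have h1 : D / t ≤ (t * Vf m h lam m) / t := Nat.div_le_div_right hD2
      rwa [Nat.mul_div_cancel_left _ htpos] at h1
    rw [hdd]
    simp only []
    by_cases hr : (a : ℕ) < D % t
    · simp only [hr, if_true]
      have hmod : 1 ≤ D % t := by omega
      have hlt : D / t < Vf m h lam m := by
        by_contra hge
        push_neg at hge
        have h2 : t * Vf m h lam m ≤ t * (D / t) := Nat.mul_le_mul_left t hge
        have h3 := Nat.div_add_mod D t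
        omega
      omega
    · simp only [hr, if_false]
      omega
  -- Step 6: capacities
  set B : ℕ := nuN m h lam 0 with hB
  set gN : Fin t → ℕ → ℕ := fun a => lamN m (MuD m h lam (dd a)) with hgN
  have hgNval : ∀ a (i : Fin m), gN a i.1 = MuD m h lam (dd a) i := by
    intro a i
    rw [hgN]
    exact lamN_val i
  have hgNanti : ∀ a, ∀ i j, i ≤ j → gN a j ≤ gN a i := by
    intro a
    exact lamN_anti (MuD_partition hlam)
  have hgNB : ∀ a i, gN a i ≤ B := by
    intro a i
    rw [hgN, hB]
    unfold lamN
    by_cases hi : i < m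
    · simp only [hi, dif_pos]
      calc MuD m h lam (dd a) ⟨i, hi⟩ ≤ nuN m h lam i := MuD_le_nu hlam _
        _ ≤ nuN m h lam 0 := nuN_anti 0 i (Nat.zero_le i)
    · simp [hi]
  set conj : Fin t → ℕ → ℕ :=
    fun a j => ((range m).filter (fun i => j < gN a i)).card with hconj
  have hcell : ∀ a k, k ≤ m →
      ∑ i ∈ range k, gN a i = ∑ j ∈ range B, min k (conj a j) :=
    fun a k hk => cell_count (hgNanti a) (hgNB a) k hk
  -- Step 7: prefix sums of gN are given by phiD
  have hgNphi : ∀ a k, k ≤ m →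
      ((∑ i ∈ range k, gN a i : ℕ) : ℤ) = phiD m h lam (dd a) k := by
    intro a k hk
    have h1 := MuD_prefix (m := m) (h := h) (lam := lam) (d := dd a) (hdd1 a) k hk
    have h2 : ∑ i ∈ pref m k, ((MuD m h lam (dd a) i : ℤ))
        = ∑ j ∈ range k, ((gN a j : ℤ)) := by
      apply sum_pref_range (fun i => ((MuD m h lam (dd a) i : ℤ)))
        (fun j => ((gN a j : ℤ))) _ k hk
      intro i
      show ((gN a i.1 : ℕ) : ℤ) = ((MuD m h lam (dd a) i : ℕ) : ℤ)
      exact_mod_cast hgNval a i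
    rw [h2] at h1
    rw [← h1]
    push_cast
    rfl
  -- Step 8: key inequality
  have hkey : ∀ T : Finset (Fin m),
      ((∑ i ∈ T, P i : ℕ) : ℤ) ≤ ∑ a, phiD m h lam (dd a) T.card := by
    intro T
    have hkm : T.card ≤ m := hcardle T
    rcases le_or_gt (Vf m h lam T.card + Lf m lam T.card) (D / t) with hcase | hcase
    · have hphi : ∀ a, phiD m h lam (dd a) T.card = (Vf m h lam T.card : ℤ) := by
        intro a
        have h1 : D / t ≤ dd a := by
          rw [hdd]
          by_cases hr : (a : ℕ) < D % t <;> simp only [hr, if_true, if_false] <;> omega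
        have h2 : Vf m h lam T.card + Lf m lam T.card ≤ dd a := le_trans hcase h1
        unfold phiD
        have h3 : (Vf m h lam T.card : ℤ) ≤ (dd a : ℤ) - (Lf m lam T.card : ℤ) := by
          have := h2
          push_cast
          omega
        omega
      rw [Finset.sum_congr rfl (fun a _ => hphi a), Finset.sum_const, Finset.card_univ,
        Fintype.card_fin, nsmul_eq_mul]
      have h4 := hupper T
      have h5 : ((∑ i ∈ T, P i : ℕ) : ℤ) ≤ ((t * Vf m h lam T.card : ℕ) : ℤ) := by
        exact_mod_cast h4
      push_cast at h5 ⊢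
      omega
    · have hphi : ∀ a, phiD m h lam (dd a) T.card
          = (dd a : ℤ) - (Lf m lam T.card : ℤ) := by
        intro a
        have h1 : dd a ≤ D / t + 1 := by
          rw [hdd]
          by_cases hr : (a : ℕ) < D % t <;> simp only [hr, if_true, if_false] <;> omega
        have h2 : dd a ≤ Vf m h lam T.card + Lf m lam T.card := by omega
        unfold phiD
        have h3 : (dd a : ℤ) - (Lf m lam T.card : ℤ) ≤ (Vf m h lam T.card : ℤ) := by
          push_cast
          omega
        omega
      rw [Finset.sum_congr rfl (fun a _ => hphi a), Finset.sum_sub_distrib,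
        Finset.sum_const, Finset.card_univ, Fintype.card_fin, nsmul_eq_mul]
      have h4 : ∑ a, ((dd a : ℤ)) = (D : ℤ) := by
        rw [← hddsum]
        push_cast
        rfl
      rw [h4]
      have h5 := hlower T
      have h6 : ∑ i ∈ T, P i + ∑ i ∈ Tᶜ, P i = D := by
        rw [hD, Finset.sum_add_sum_compl]
      have h7 : ((∑ i ∈ T, P i : ℕ) : ℤ) + ((∑ i ∈ Tᶜ, P i : ℕ) : ℤ) = (D : ℤ) := by
        exact_mod_cast congrArg (Nat.cast : ℕ → ℤ) h6
      have h8 : ((t * Lf m lam T.card : ℕ) : ℤ) ≤ ((∑ i ∈ Tᶜ, P i : ℕ) : ℤ) := by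
        exact_mod_cast h5
      push_cast at h7 h8 ⊢
      omega
  -- Step 9: apply Gale–Ryser
  have hGRhyp : ∀ T ⊆ (Finset.univ : Finset (Fin m)),
      ∑ i ∈ T, P i ≤ ∑ jj : Fin t × Fin B, min T.card (conj jj.1 jj.2.1) := by
    intro T _
    have hkm : T.card ≤ m := hcardle T
    have h1 : ∑ jj : Fin t × Fin B, min T.card (conj jj.1 jj.2.1)
        = ∑ a : Fin t, ∑ j ∈ range B, min T.card (conj a j) := by
      rw [Fintype.sum_prod_type]
      apply Finset.sum_congr rfl
      intro a _
      rw [← Fin.sum_univ_eq_sum_range]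
    have h2 : ∀ a : Fin t, ∑ j ∈ range B, min T.card (conj a j)
        = ∑ i ∈ range T.card, gN a i := fun a => (hcell a T.card hkm).symm
    have h3 : ((∑ i ∈ T, P i : ℕ) : ℤ) ≤ ((∑ jj : Fin t × Fin B, min T.card (conj jj.1 jj.2.1) : ℕ) : ℤ) := by
      calc ((∑ i ∈ T, P i : ℕ) : ℤ) ≤ ∑ a, phiD m h lam (dd a) T.card := hkey T
        _ = ∑ a : Fin t, ((∑ i ∈ range T.card, gN a i : ℕ) : ℤ) :=
            Finset.sum_congr rfl (fun a _ => (hgNphi a T.card hkm).symm)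
        _ = ((∑ a : Fin t, ∑ i ∈ range T.card, gN a i : ℕ) : ℤ) := by push_cast; rfl
        _ = _ := by
            rw [h1]
            congr 1
            exact (Finset.sum_congr rfl (fun a _ => h2 a)).symm
    exact_mod_cast h3
  obtain ⟨S, hSsub, hScard, hScount⟩ :=
    gale_ryser_weak (κ := Fin m) (ι := Fin t × Fin B) m Finset.univ
      (by rw [Finset.card_univ, Fintype.card_fin]) (fun jj => conj jj.1 jj.2.1) P hGRhyp
  -- Step 10: the summands
  set vN : Fin t → Fin m → ℕ :=
    fun a i => ∑ j : Fin B, (if i ∈ S (a, j) then 1 else 0) with hvN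
  have hvsum : ∀ i, P i = ∑ a, vN a i := by
    intro i
    have h1 := hScount i (Finset.mem_univ i)
    rw [h1, Fintype.sum_prod_type]
  have hvT : ∀ (a : Fin t) (T : Finset (Fin m)),
      ∑ i ∈ T, vN a i ≤ ∑ j ∈ range B, min T.card (conj a j) := by
    intro a T
    have h1 : ∑ i ∈ T, vN a i = ∑ j : Fin B, ∑ i ∈ T, (if i ∈ S (a, j) then 1 else 0) := by
      rw [hvN]
      exact Finset.sum_comm
    rw [h1, ← Fin.sum_univ_eq_sum_range (fun j => min T.card (conj a j)) B]
    apply Finset.sum_le_sum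
    intro j _
    have h2 : ∑ i ∈ T, (if i ∈ S (a, j) then 1 else 0) = (T ∩ S (a, j)).card := by
      rw [Finset.sum_ite_mem, Finset.sum_const, smul_eq_mul, mul_one]
    rw [h2]
    apply le_min
    · exact Finset.card_le_card (Finset.inter_subset_left)
    · calc (T ∩ S (a, j)).card ≤ (S (a, j)).card :=
          Finset.card_le_card (Finset.inter_subset_right)
        _ ≤ conj a j := hScard (a, j)
  have hvuniv : ∀ a, ∑ i, vN a i ≤ dd a := by
    intro a
    have h1 := hvT a Finset.univ
    have hcu : (Finset.univ : Finset (Fin m)).card = m := by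
      rw [Finset.card_univ, Fintype.card_fin]
    rw [hcu] at h1
    have h2 : ∑ j ∈ range B, min m (conj a j) = ∑ i ∈ range m, gN a i :=
      (hcell a m (le_refl m)).symm
    rw [h2] at h1
    have h3 := hgNphi a m (le_refl m)
    rw [phiD_m (hdd2 a)] at h3
    have h4 : ∑ i ∈ range m, gN a i = dd a := by exact_mod_cast h3
    omega
  have hvdeg : ∀ a, ∑ i, vN a i = dd a := by
    by_contra hne
    push_neg at hne
    obtain ⟨a, ha⟩ := hne
    have hlt : ∑ i, vN a i < dd a := lt_of_le_of_ne (hvuniv a) ha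
    have h1 : ∑ b, ∑ i, vN b i < ∑ b, dd b :=
      Finset.sum_lt_sum (fun b _ => hvuniv b) ⟨a, Finset.mem_univ a, hlt⟩
    have h2 : ∑ b, ∑ i, vN b i = D := by
      rw [Finset.sum_comm, hD]
      exact (Finset.sum_congr rfl (fun i _ => (hvsum i).symm))
    rw [h2, hddsum] at h1
    exact lt_irrefl _ h1
  -- Step 11: each summand lies in the Newton polytope
  have hmem : ∀ a, (fun i => ((vN a i : ℕ) : ℝ)) ∈ NewtG m h lam := by
    intro a
    set w : Fin m → ℝ := fun i => ((MuD m h lam (dd a) i : ℕ) : ℝ) with hw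
    have hwanti : ∀ i j : Fin m, i ≤ j → w j ≤ w i := by
      intro i j hij
      have h0 := MuD_partition (m := m) (h := h) (lam := lam) (d := dd a) hlam i j hij
      show ((MuD m h lam (dd a) j : ℕ) : ℝ) ≤ ((MuD m h lam (dd a) i : ℕ) : ℝ)
      exact_mod_cast h0
    have hxT : ∀ T : Finset (Fin m),
        ∑ i ∈ T, ((vN a i : ℝ)) ≤ ∑ i ∈ pref m T.card, w i := by
      intro T
      have hkm : T.card ≤ m := hcardle T
      have h1 := hvT a T
      have h2 : ∑ j ∈ range B, min T.card (conj a j) = ∑ i ∈ range T.card, gN a i :=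
        (hcell a T.card hkm).symm
      have h3 : ∑ i ∈ pref m T.card, MuD m h lam (dd a) i = ∑ i ∈ range T.card, gN a i :=
        sum_pref_range _ _ (fun i => hgNval a i) T.card hkm
      have h4 : ∑ i ∈ T, vN a i ≤ ∑ i ∈ pref m T.card, MuD m h lam (dd a) i := by
        omega
      have h5 : ((∑ i ∈ T, vN a i : ℕ) : ℝ) ≤ ((∑ i ∈ pref m T.card, MuD m h lam (dd a) i : ℕ) : ℝ) := by
        exact_mod_cast h4
      push_cast at h5
      exact h5
    have hsumw : ∑ i, ((vN a i : ℝ)) = ∑ i, w i := by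
      have h1 : ((∑ i, vN a i : ℕ) : ℝ) = ((dd a : ℕ) : ℝ) := by
        exact_mod_cast congrArg (Nat.cast : ℕ → ℝ) (hvdeg a)
      have h2 := MuD_sum (m := m) (h := h) (lam := lam) (d := dd a) (hdd1 a) (hdd2 a)
      have h3 : ∑ i, w i = ((dd a : ℕ) : ℝ) := by
        rw [hw]
        show ∑ i, ((MuD m h lam (dd a) i : ℕ) : ℝ) = _
        exact_mod_cast congrArg (Int.cast : ℤ → ℝ) h2
      rw [h3]
      push_cast at h1 ⊢
      exact h1
    have hr := rado hwanti hxT hsumw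
    have hsub : orbSet w ⊆ {x : Fin m → ℝ | ∃ mu : Fin m → ℕ, AMem m h lam mu ∧
        ∃ σ : Equiv.Perm (Fin m), x = fun i => (mu (σ i) : ℝ)} := by
      rintro - ⟨σ, rfl⟩
      exact ⟨MuD m h lam (dd a), MuD_AMem hh hlam, σ, by funext i; simp [hw]⟩
    exact convexHull_mono hsub hr
  -- Step 12: conclude
  refine ⟨fun a i => ((vN a i : ℕ) : ℤ), ?_, ?_⟩
  · intro a
    have hcast : (fun i => (((vN a i : ℕ) : ℤ) : ℝ)) = fun i => ((vN a i : ℕ) : ℝ) := by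
      funext i
      push_cast
      rfl
    rw [hcast]
    exact hmem a
  · funext i
    have h1 := hvsum i
    have h2 : p i = ((P i : ℤ)) := (hPcast i).symm
    rw [h2]
    have h3 : (∑ a, (fun a i => ((vN a i : ℕ) : ℤ)) a) i = ∑ a, ((vN a i : ℤ)) := by
      rw [Finset.sum_apply]
    rw [h3]
    exact_mod_cast congrArg (Nat.cast : ℕ → ℤ) h1
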